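/- arXiv:1210.2082 — 3 statements merged into one kernel-verified Lean document; each statement's English description precedes it below -/
import Mathlib

section
/- For α ∈ Z^n and μ ∈ N^n with Supp(α) ⊆ Supp(μ), the initial term of ∂_α(e^μ) with respect to the graded lexicographic order on C[e_1,...,e_n] is α_i μ_i e^μ/e_i, where i is the maximal element of Supp(α) (assuming α ≠ 0). -/
open MvPolynomial

/-- The derivation `∂_α = Σᵢ αᵢ ∂/∂eᵢ` on `ℂ[e₁,…,eₙ]`. -/
noncomputable def pd {n : ℕ} (α : Fin n → ℤ) (f : MvPolynomial (Fin n) ℂ) :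
    MvPolynomial (Fin n) ℂ :=
  ∑ i : Fin n, (α i : ℂ) • MvPolynomial.pderiv i f

/-- Graded lexicographic order on exponent vectors, with `e₁ > e₂ > … > eₙ`:
compare total degree first, then lexicographically (the first index where the
exponents differ decides, a larger exponent on an earlier variable being larger). -/
def glexLT {n : ℕ} (ν κ : Fin n →₀ ℕ) : Prop :=
  (∑ j : Fin n, ν j) < (∑ j : Fin n, κ j) ∨
    ((∑ j : Fin n, ν j) = (∑ j : Fin n, κ j) ∧
      ∃ j : Fin n, ν j < κ j ∧ ∀ l : Fin n, l < j → ν l = κ l)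

/-- for `α ∈ ℤⁿ` nonzero and `μ ∈ ℕⁿ` with `Supp(α) ⊆ Supp(μ)`, the initial
term of `∂_α(e^μ)` with respect to graded lex is `αᵢ μᵢ e^μ/eᵢ` where `i = max Supp(α)`:
the coefficient of the monomial `e^μ/eᵢ` in `∂_α(e^μ)` equals `αᵢ μᵢ ≠ 0`, and every
other monomial occurring in `∂_α(e^μ)` is strictly smaller in graded lex order. -/
theorem stmt6 (n : ℕ) (α : Fin n → ℤ) (μ : Fin n →₀ ℕ) (i : Fin n)
    (hsupp : ∀ j, α j ≠ 0 → μ j ≠ 0)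
    (hi : α i ≠ 0) (hmax : ∀ j, α j ≠ 0 → j ≤ i) :
    MvPolynomial.coeff (μ - Finsupp.single i 1) (pd α (MvPolynomial.monomial μ (1 : ℂ)))
        = (α i : ℂ) * (μ i : ℂ) ∧
      (α i : ℂ) * (μ i : ℂ) ≠ 0 ∧
      ∀ ν ∈ (pd α (MvPolynomial.monomial μ (1 : ℂ))).support,
        ν ≠ μ - Finsupp.single i 1 → glexLT ν (μ - Finsupp.single i 1) := by
  have hcoeff : ∀ ν, MvPolynomial.coeff ν (pd α (MvPolynomial.monomial μ (1 : ℂ)))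
      = ∑ j : Fin n, if μ - Finsupp.single j 1 = ν then (α j : ℂ) * (μ j : ℂ) else 0 := by
    intro ν
    simp [pd, coeff_sum, pderiv_monomial, coeff_monomial, mul_ite]
  -- sub apply facts
  have hsub : ∀ j k : Fin n, (μ - Finsupp.single j 1 : Fin n →₀ ℕ) k = μ k - (if j = k then 1 else 0) := by
    intro j k; simp [Finsupp.sub_apply, Finsupp.single_apply]
  have hμi : μ i ≠ 0 := hsupp i hi
  -- degree sum fact
  have hdeg : ∀ j : Fin n, μ j ≠ 0 →
      (∑ k : Fin n, (μ - Finsupp.single j 1 : Fin n →₀ ℕ) k) + 1 = ∑ k : Fin n, μ k := by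
    intro j hj
    have : (∑ k : Fin n, (μ - Finsupp.single j 1 : Fin n →₀ ℕ) k) + ∑ k : Fin n, (Finsupp.single j 1 : Fin n →₀ ℕ) k
        = ∑ k : Fin n, μ k := by
      rw [← Finset.sum_add_distrib]
      refine Finset.sum_congr rfl fun k _ => ?_
      rw [hsub, Finsupp.single_apply]
      rcases eq_or_ne j k with h | h
      · subst h; simp [Nat.sub_add_cancel (Nat.one_le_iff_ne_zero.mpr hj)]
      · simp [h]
    simpa [Finsupp.single_apply, Finset.sum_ite_eq] using this
  refine ⟨?_, ?_, ?_⟩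
  · rw [hcoeff]
    rw [Finset.sum_eq_single i]
    · simp
    · intro j _ hj
      rcases eq_or_ne (μ - Finsupp.single j 1) (μ - Finsupp.single i 1) with h | h
      · have := DFunLike.congr_fun h j
        have hij : i ≠ j := Ne.symm hj
        simp [Finsupp.sub_apply, Finsupp.single_apply, hij] at this
        have hμj : μ j = 0 := by omega
        simp [h, hμj]
      · simp [h]
    · intro h; exact absurd (Finset.mem_univ i) h
  · have : (μ i : ℂ) ≠ 0 := Nat.cast_ne_zero.mpr hμi
    exact mul_ne_zero (Int.cast_ne_zero.mpr hi) this
  · intro ν hν hne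
    rw [MvPolynomial.mem_support_iff, hcoeff] at hν
    obtain ⟨j, _, hj⟩ := Finset.exists_ne_zero_of_sum_ne_zero hν
    by_cases hjν : μ - Finsupp.single j 1 = ν
    · rw [if_pos hjν] at hj
      have hαj : α j ≠ 0 := by
        intro h; simp [h] at hj
      have hμj : μ j ≠ 0 := hsupp j hαj
      have hji : j ≠ i := by rintro rfl; exact hne hjν.symm
      have hjlt : j < i := lt_of_le_of_ne (hmax j hαj) hji
      right
      constructor
      · have h1 := hdeg j hμj
        have h2 := hdeg i hμi
        rw [← hjν]; omega
      · refine ⟨j, ?_, ?_⟩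
        · rw [← hjν, hsub, hsub, if_pos rfl, if_neg hji.symm]
          omega
        · intro l hl
          rw [← hjν, hsub, hsub, if_neg (ne_of_gt hl), if_neg (ne_of_gt (hl.trans hjlt))]
    · rw [if_neg hjν] at hj; exact absurd rfl hj
end

section
/- Let ι* : Z^n → Z^k be a surjective linear map whose matrix is unimodular (every maximal minor lies in {−1,0,1}, equivalently all minors with respect to some basis lie in {−1,0,1}). Then every element α of ker(ι*) ⊆ Z^n that is primitive and has support minimal among nonzero elements of ker(ι*) (a signed circuit) satisfies α_i ∈ {−1, 0, 1} for all i. -/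
/-- Let `ι* : ℤⁿ → ℤᵏ` be a surjective linear map (given by a matrix `A`)
which is unimodular: every maximal (`k×k`) minor lies in `{−1,0,1}`.  Then every signed
circuit of `ker ι*` — i.e. every primitive element `α ∈ ker ι*` whose support is minimal
among supports of nonzero elements of `ker ι*` — has all entries in `{−1,0,1}`. -/
theorem stmt11 (n k : ℕ) (A : Matrix (Fin k) (Fin n) ℤ)
    (hsurj : Function.Surjective (A.mulVec : (Fin n → ℤ) → (Fin k → ℤ)))
    (hunim : ∀ g : Fin k → Fin n, (A.submatrix id g).det ∈ ({-1, 0, 1} : Set ℤ))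
    (α : Fin n → ℤ) (hker : A.mulVec α = 0) (hne : α ≠ 0)
    (hprim : Finset.univ.gcd α = 1)
    (hmin : ∀ α' : Fin n → ℤ, α' ≠ 0 → A.mulVec α' = 0 →
      ¬ ({i | α' i ≠ 0} ⊂ {i | α i ≠ 0})) :
    ∀ i, α i ∈ ({-1, 0, 1} : Set ℤ) := by
  classical
  suffices key : ∀ j, α j ≠ 0 → ∀ i, α j ∣ α i by
    intro i
    by_cases hi : α i = 0
    · simp [hi]
    · have h1 : α i ∣ 1 := by
        rw [← hprim]
        exact Finset.dvd_gcd fun t _ => key i hi t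
      rcases Int.isUnit_iff.mp (isUnit_of_dvd_one h1) with h | h
      · simp [h]
      · simp [h]
  intro j hj
  -- the columns of A, over ℚ
  set f : Fin n → (Fin k → ℚ) := fun i r => ((A r i : ℤ) : ℚ) with hf
  set s : Set (Fin n) := {i | α i ≠ 0 ∧ i ≠ j} with hs
  haveI : Fintype ↥s := Fintype.ofFinite ↥s
  -- the columns indexed by s are linearly independent over ℚ
  have hindep : LinearIndependent ℚ (fun i : ↥s => f i) := by
    by_contra hcon
    obtain ⟨c, hc0, i₀, hi₀⟩ := Fintype.not_linearIndependent_iff.mp hcon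
    obtain ⟨b, hb⟩ :=
      IsLocalization.exist_integer_multiples_of_finite (nonZeroDivisors ℤ) c
    choose m hm using hb
    have hmcast : ∀ i : ↥s, ((m i : ℤ) : ℚ) = (b : ℤ) * c i := by
      intro i
      have := hm i
      rwa [algebraMap_int_eq, eq_intCast, zsmul_eq_mul] at this
    set α' : Fin n → ℤ := fun i => if h : i ∈ s then m ⟨i, h⟩ else 0 with hα'
    have hbne : ((b : ℤ) : ℚ) ≠ 0 := by
      exact_mod_cast Int.cast_ne_zero.mpr (nonZeroDivisors.coe_ne_zero b)
    have hα'i₀ : α' (i₀ : Fin n) ≠ 0 := by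
      have h1 : ((m i₀ : ℤ) : ℚ) ≠ 0 := by
        rw [hmcast i₀]
        exact mul_ne_zero hbne hi₀
      have h2 : α' (i₀ : Fin n) = m i₀ := by
        rw [hα']
        simp only [dif_pos i₀.2]
      rw [h2]
      exact_mod_cast h1
    have hα'ne : α' ≠ 0 := fun h => hα'i₀ (by rw [h]; rfl)
    have hα'supp : ∀ i, α' i ≠ 0 → i ∈ s := by
      intro i hi
      by_contra h
      exact hi (by simp [hα', dif_neg h])
    have hker' : A.mulVec α' = 0 := by
      funext r
      have : ((A.mulVec α' r : ℤ) : ℚ) = 0 := by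
        have hsum : ((A.mulVec α' r : ℤ) : ℚ) = ∑ i : Fin n, (A r i : ℚ) * (α' i : ℚ) := by
          simp [Matrix.mulVec, dotProduct]
        rw [hsum]
        have hstep : ∑ i : Fin n, (A r i : ℚ) * (α' i : ℚ)
            = ∑ i ∈ Finset.univ.filter (· ∈ s), (A r i : ℚ) * (α' i : ℚ) := by
          rw [Finset.sum_filter_of_ne]
          intro i _ hne'
          by_contra h
          exact hne' (by simp [hα', dif_neg h])
        rw [hstep,
          Finset.sum_subtype (p := (· ∈ s)) (Finset.univ.filter (· ∈ s)) (by simp) fun i => (A r i : ℚ) * (α' i : ℚ)]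
        have : ∀ i : ↥s, (A r (i : Fin n) : ℚ) * (α' (i : Fin n) : ℚ)
            = (b : ℤ) * (c i * f (i : Fin n) r) := by
          intro i
          have : α' (i : Fin n) = m i := by simp [hα', dif_pos i.2]
          rw [this, hmcast i, hf]
          ring
        rw [Finset.sum_congr rfl fun i _ => this i, ← Finset.mul_sum]
        have : ∑ i : ↥s, c i * f (i : Fin n) r = 0 := by
          have := congrFun hc0 r
          simpa using this
        rw [this, mul_zero]
      exact_mod_cast this
    refine hmin α' hα'ne hker' ?_
    rw [Set.ssubset_def]
    constructor
    · intro i hi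
      exact ((hα'supp i hi).1 : α i ≠ 0)
    · intro hcon2
      have : α' j ≠ 0 := hcon2 hj
      exact this (by simp [hα', hs])
  -- the columns of A span ℚ^k
  have hsingle : ∀ r : Fin k, Pi.single r (1 : ℚ) ∈ Submodule.span ℚ (Set.range f) := by
    intro r
    obtain ⟨u, hu⟩ := hsurj (Pi.single r 1)
    have hrepr : ∑ i : Fin n, (u i : ℚ) • f i = Pi.single r (1 : ℚ) := by
      funext r'
      have := congrFun hu r'
      have h1 : ((A.mulVec u r' : ℤ) : ℚ) = ∑ i : Fin n, (u i : ℚ) * (A r' i : ℚ) := by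
        simp [Matrix.mulVec, dotProduct, mul_comm]
      have h2 : (((Pi.single r (1 : ℤ) : Fin k → ℤ) r' : ℤ) : ℚ) = (Pi.single r (1 : ℚ) : Fin k → ℚ) r' := by
        by_cases h : r' = r
        · subst h; simp
        · simp [Pi.single_apply, h, Ne.symm h]
      calc (∑ i : Fin n, (u i : ℚ) • f i) r' = ∑ i : Fin n, (u i : ℚ) * (A r' i : ℚ) := by
            simp [hf]
        _ = ((A.mulVec u r' : ℤ) : ℚ) := h1.symm
        _ = (Pi.single r (1 : ℚ) : Fin k → ℚ) r' := by rw [this]; exact h2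
    rw [← hrepr]
    exact Submodule.sum_mem _ fun i _ =>
      Submodule.smul_mem _ _ (Submodule.subset_span ⟨i, rfl⟩)
  have hspan : Submodule.span ℚ (Set.range f) = ⊤ := by
    rw [eq_top_iff, ← (Pi.basisFun ℚ (Fin k)).span_eq, Submodule.span_le]
    rintro _ ⟨r, rfl⟩
    simpa using hsingle r
  -- extend to a basis chosen among columns
  have himage : LinearIndepOn ℚ id (f '' s) := LinearIndepOn.id_image hindep
  have hsubrange : f '' s ⊆ Set.range f := Set.image_subset_range f s
  set bset : Set (Fin k → ℚ) := himage.extend hsubrange with hbset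
  have hb_sub : bset ⊆ Set.range f := himage.extend_subset hsubrange
  have hb_sup : f '' s ⊆ bset := himage.subset_extend hsubrange
  have hb_indep : LinearIndependent ℚ ((↑) : bset → (Fin k → ℚ)) :=
    himage.linearIndepOn_extend hsubrange
  have hb_span : Set.range f ⊆ ↑(Submodule.span ℚ bset) :=
    himage.subset_span_extend hsubrange
  haveI : Fintype ↥bset := ((Set.finite_range f).subset hb_sub).fintype
  have hb_top : ⊤ ≤ Submodule.span ℚ (Set.range ((↑) : bset → (Fin k → ℚ))) := by
    rw [Subtype.range_coe]
    rw [← hspan]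
    exact Submodule.span_le.mpr hb_span
  let bas : Module.Basis ↥bset ℚ (Fin k → ℚ) := Module.Basis.mk hb_indep hb_top
  have hcard : Fintype.card ↥bset = k := by
    have h1 := Module.finrank_eq_card_basis bas
    have h2 : Module.finrank ℚ (Fin k → ℚ) = k := Module.finrank_fin_fun ℚ
    omega
  let e : Fin k ≃ ↥bset := (Fintype.equivFinOfCardEq hcard).symm
  -- choose index preimages for basis vectors, preferring indices in s
  have hbr : ∀ v : ↥bset, ∃ i : Fin n, f i = ↑v ∧ ((v : Fin k → ℚ) ∈ f '' s → i ∈ s) := by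
    intro v
    by_cases h : (v : Fin k → ℚ) ∈ f '' s
    · obtain ⟨i, hi, hfi⟩ := h
      exact ⟨i, hfi, fun _ => hi⟩
    · obtain ⟨i, hfi⟩ := hb_sub v.2
      exact ⟨i, hfi, fun hc => absurd hc h⟩
  choose pick hpick1 hpick2 using hbr
  set g : Fin k → Fin n := fun t => pick (e t) with hg
  have hfg : ∀ t, f (g t) = ↑(e t) := fun t => hpick1 (e t)
  have hginj : Function.Injective g := by
    intro t1 t2 h
    have : (↑(e t1) : Fin k → ℚ) = ↑(e t2) := by rw [← hfg, ← hfg, h]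
    exact e.injective (Subtype.coe_injective this)
  -- s is contained in the range of g
  have hfinj : ∀ i1 ∈ s, ∀ i2 ∈ s, f i1 = f i2 → i1 = i2 := by
    intro i1 h1 i2 h2 hff
    have := hindep.injective (a₁ := ⟨i1, h1⟩) (a₂ := ⟨i2, h2⟩) hff
    exact Subtype.ext_iff.mp this
  have hs_range : ∀ i ∈ s, ∃ t, g t = i := by
    intro i hi
    have hv : f i ∈ bset := hb_sup (Set.mem_image_of_mem f hi)
    set v : ↥bset := ⟨f i, hv⟩ with hvdef
    refine ⟨e.symm v, ?_⟩
    have h1 : f (pick v) = f i := hpick1 v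
    have h2 : pick v ∈ s := hpick2 v ⟨i, hi, rfl⟩
    have : pick v = i := hfinj _ h2 _ hi h1
    simp [hg, this]
  -- the k×k submatrix B = A.submatrix id g is invertible over ℤ
  have hcols : LinearIndependent ℚ (fun t => f (g t)) := by
    have h1 : LinearIndependent ℚ (fun t : Fin k => ((e t : Fin k → ℚ))) :=
      hb_indep.comp e e.injective
    have : (fun t => f (g t)) = fun t : Fin k => ((e t : Fin k → ℚ)) := funext hfg
    rw [this]
    exact h1
  set M : Matrix (Fin k) (Fin k) ℚ := (A.map (Int.cast : ℤ → ℚ)).submatrix id g with hM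
  have hdetQ : M.det ≠ 0 := by
    have hiu : IsUnit M := by
      rw [← Matrix.linearIndependent_cols_iff_isUnit]
      have heq : (fun t => M.transpose t) = fun t => f (g t) := by
        funext t r
        rfl
      rw [show M.col = (fun t => M.transpose t) from rfl, heq]
      exact hcols
    exact IsUnit.ne_zero ((Matrix.isUnit_iff_isUnit_det _).mp hiu)
  have hdetZ : (A.submatrix id g).det ≠ 0 := by
    intro h
    apply hdetQ
    have hMd : M.det = (Int.castRingHom ℚ) (A.submatrix id g).det := by
      rw [hM, Matrix.submatrix_map]
      exact (RingHom.map_det (Int.castRingHom ℚ) (A.submatrix id g)).symm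
    rw [hMd, h]
    simp
  have hdetU : IsUnit (A.submatrix id g).det := by
    rcases hunim g with h | h | h
    · rw [h]; exact isUnit_one.neg
    · exact absurd h hdetZ
    · rw [h]; exact isUnit_one
  set B : Matrix (Fin k) (Fin k) ℤ := A.submatrix id g with hB
  haveI : Invertible B := B.invertibleOfIsUnitDet hdetU
  set x : Fin k → ℤ := (⅟B).mulVec (fun r => A r j) with hx
  have hBx : B.mulVec x = fun r => A r j := by
    rw [hx, Matrix.mulVec_mulVec, mul_invOf_self, Matrix.one_mulVec]
  set y : Fin k → ℤ := fun t => if g t = j then 0 else -α (g t) with hy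
  have hBy : B.mulVec y = fun r => α j * A r j := by
    funext r
    have hsum : B.mulVec y r = ∑ t : Fin k, A r (g t) * (if g t = j then 0 else -α (g t)) := by
      simp [hB, hy, Matrix.mulVec, dotProduct, Matrix.submatrix]
    rw [hsum]
    have h1 : ∑ t : Fin k, A r (g t) * (if g t = j then 0 else -α (g t))
        = ∑ i ∈ Finset.univ.image g, A r i * (if i = j then 0 else -α i) := by
      rw [Finset.sum_image (fun t _ t' _ h => hginj h)]
    have h2 : ∑ i ∈ Finset.univ.image g, A r i * (if i = j then 0 else -α i)
        = ∑ i : Fin n, A r i * (if i = j then 0 else -α i) := by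
      apply Finset.sum_subset (Finset.subset_univ _)
      intro i _ hi
      have his : i ∉ s := by
        intro h
        obtain ⟨t, ht⟩ := hs_range i h
        exact hi (Finset.mem_image.mpr ⟨t, Finset.mem_univ t, ht⟩)
      by_cases hij : i = j
      · simp [hij]
      · have : α i = 0 := by
          by_contra h
          exact his ⟨h, hij⟩
        simp [hij, this]
    have h3 : ∑ i : Fin n, A r i * (if i = j then 0 else -α i)
        = (∑ i : Fin n, if i = j then A r i * α i else 0) - ∑ i : Fin n, A r i * α i := by
      rw [← Finset.sum_sub_distrib]
      apply Finset.sum_congr rfl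
      intro i _
      by_cases hij : i = j <;> simp [hij] <;> ring
    have h4 : (∑ i : Fin n, if i = j then A r i * α i else 0) = A r j * α j := by
      simp [Finset.sum_ite_eq']
    have h5 : ∑ i : Fin n, A r i * α i = 0 := by
      have := congrFun hker r
      simpa [Matrix.mulVec, dotProduct] using this
    rw [h1, h2, h3, h4, h5]
    ring
  have hxy : y = α j • x := by
    have h1 : B.mulVec (α j • x) = fun r => α j * A r j := by
      rw [Matrix.mulVec_smul, hBx]
      funext r
      simp [mul_comm]
    have h2 : B.mulVec y = B.mulVec (α j • x) := by rw [hBy, h1]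
    have h3 := congrArg (⅟B).mulVec h2
    rwa [Matrix.mulVec_mulVec, Matrix.mulVec_mulVec, invOf_mul_self, Matrix.one_mulVec,
      Matrix.one_mulVec] at h3
  intro i
  by_cases hi : α i = 0
  · simp [hi]
  by_cases hij : i = j
  · rw [hij]
  obtain ⟨t, ht⟩ := hs_range i ⟨hi, hij⟩
  have hyt : y t = -α i := by
    rw [hy]
    simp only [ht]
    rw [if_neg hij]
  have := congrFun hxy t
  rw [hyt] at this
  exact ⟨-x t, by simpa using congrArg Neg.neg this⟩
end

section
/- Let R = C[x_1,...,x_k] be graded with generators in positive degree and let M, M' be finitely generated graded R-modules such that M admits a finite filtration by graded submodules with associated graded isomorphic to M' as a graded R-module. If M' is free, then M is free and M ⊗_R C_λ has the same dimension as M' ⊗_R C_0 for every λ ∈ C^k (where C_λ = R/m_λ). -/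
open MvPolynomial DirectSum

/-- A grading of an `R = ℂ[x₁,…,x_k]`-module by `ℂ`-subspaces, compatible with the
standard grading of the polynomial ring. -/
def IsModuleGrading (k : ℕ) {P : Type*} [AddCommGroup P]
    [Module (MvPolynomial (Fin k) ℂ) P] [Module ℂ P]
    (Pgr : ℕ → Submodule ℂ P) : Prop :=
  DirectSum.IsInternal Pgr ∧
    ∀ (d e : ℕ) (r : MvPolynomial (Fin k) ℂ),
      r ∈ MvPolynomial.homogeneousSubmodule (Fin k) ℂ d →
        ∀ x ∈ Pgr e, r • x ∈ Pgr (d + e)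



noncomputable section Aux

/-- Pi over `Fin (n+1)` splits off the last factor. -/
def piFinLastEquiv {R : Type*} [Semiring R] {n : ℕ} (N : Fin (n + 1) → Type*)
    [∀ i, AddCommMonoid (N i)] [∀ i, Module R (N i)] :
    (∀ i, N i) ≃ₗ[R] (∀ i : Fin n, N i.castSucc) × N (Fin.last n) where
  toFun v := (fun i => v i.castSucc, v (Fin.last n))
  invFun p := Fin.lastCases p.2 p.1
  map_add' _ _ := rfl
  map_smul' _ _ := rfl
  left_inv v := by
    funext i
    induction i using Fin.lastCases with
    | last => simp
    | cast i => simp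
  right_inv p := by
    refine Prod.ext ?_ ?_ <;> simp

theorem filtration_equiv {R M : Type*} [Ring R] [AddCommGroup M] [Module R M]
    (m : ℕ) (Fil : ℕ → Submodule R M) (hmono : Monotone Fil) (h0 : Fil 0 = ⊥)
    (hproj : ∀ j, j < m → Module.Projective R
      (Fil (j + 1) ⧸ Submodule.comap (Fil (j + 1)).subtype (Fil j))) :
    ∀ j, j ≤ m → Nonempty ((Fil j) ≃ₗ[R]
      ∀ i : Fin j, (Fil ((i : ℕ) + 1) ⧸ Submodule.comap (Fil ((i : ℕ) + 1)).subtype (Fil i))) := by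
  intro j
  induction j with
  | zero =>
    intro _
    haveI : Subsingleton (Fil 0) := by rw [h0]; infer_instance
    haveI : Subsingleton (∀ i : Fin 0, (Fil ((i : ℕ) + 1) ⧸
        Submodule.comap (Fil ((i : ℕ) + 1)).subtype (Fil i))) :=
      ⟨fun a b => funext fun i => i.elim0⟩
    exact ⟨{ toFun := fun _ => 0, invFun := fun _ => 0,
             map_add' := fun _ _ => Subsingleton.elim _ _,
             map_smul' := fun _ _ => Subsingleton.elim _ _,
             left_inv := fun _ => Subsingleton.elim _ _,
             right_inv := fun _ => Subsingleton.elim _ _ }⟩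
  | succ j IH =>
    intro hj1
    obtain ⟨E⟩ := IH (Nat.le_of_succ_le hj1)
    haveI := hproj j (Nat.lt_of_succ_le hj1)
    set Q := Fil (j + 1) ⧸ Submodule.comap (Fil (j + 1)).subtype (Fil j) with hQ
    set π : (Fil (j + 1)) →ₗ[R] Q := (Submodule.comap (Fil (j + 1)).subtype (Fil j)).mkQ with hπ
    have hπs : Function.Surjective π := Submodule.mkQ_surjective _
    set ι : (Fil j) →ₗ[R] (Fil (j + 1)) := Submodule.inclusion (hmono (Nat.le_succ j)) with hι
    have hιinj : Function.Injective ι := Submodule.inclusion_injective _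
    have hexact : Function.Exact ι π := by
      rw [LinearMap.exact_iff]
      rw [hπ, Submodule.ker_mkQ, hι, Submodule.range_inclusion]
    obtain ⟨s, hs⟩ := Module.projective_lifting_property π LinearMap.id hπs
    obtain ⟨e', -⟩ := hexact.splitSurjectiveEquiv hιinj ⟨s, hs⟩
    refine ⟨e' ≪≫ₗ (E.prodCongr (LinearEquiv.refl R Q)) ≪≫ₗ ?_⟩
    exact (piFinLastEquiv (fun i : Fin (j + 1) =>
      (Fil ((i : ℕ) + 1) ⧸ Submodule.comap (Fil ((i : ℕ) + 1)).subtype (Fil i)))).symm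

theorem fiber_finrank (k : ℕ) (N : Type*) [AddCommGroup N]
    [Module (MvPolynomial (Fin k) ℂ) N] [Module ℂ N]
    [IsScalarTower ℂ (MvPolynomial (Fin k) ℂ) N]
    [Module.Finite (MvPolynomial (Fin k) ℂ) N]
    [Module.Free (MvPolynomial (Fin k) ℂ) N] (lam : Fin k → ℂ) :
    Module.finrank ℂ
        (N ⧸ ((RingHom.ker (MvPolynomial.eval lam : MvPolynomial (Fin k) ℂ →+* ℂ)) •
          (⊤ : Submodule (MvPolynomial (Fin k) ℂ) N))) =
      Module.finrank (MvPolynomial (Fin k) ℂ) N := by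
  set R := MvPolynomial (Fin k) ℂ
  set I : Ideal R := RingHom.ker (MvPolynomial.eval lam : R →+* ℂ) with hI
  have hsurj : Function.Surjective (MvPolynomial.aeval lam : R →ₐ[ℂ] ℂ) := fun c =>
    ⟨MvPolynomial.C c, by simp⟩
  have hker : RingHom.ker ((MvPolynomial.aeval lam : R →ₐ[ℂ] ℂ) : R →+* ℂ) = I := by
    simp only [hI]
    congr 1
  have eqv : (R ⧸ I) ≃ₐ[ℂ] ℂ := hker ▸ Ideal.quotientKerAlgEquivOfSurjective hsurj
  set ιB := Module.Free.ChooseBasisIndex R N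
  have b : Module.Basis ιB R N := Module.Free.chooseBasis R N
  have chain : (N ⧸ (I • (⊤ : Submodule R N))) ≃ₗ[R] (ιB →₀ (R ⧸ I)) :=
    (TensorProduct.quotTensorEquivQuotSMul N I).symm ≪≫ₗ LinearEquiv.lTensor (R ⧸ I) b.repr ≪≫ₗ
      TensorProduct.finsuppScalarRight R R (R ⧸ I) (ι := ιB)
  have G : (N ⧸ (I • (⊤ : Submodule R N))) ≃ₗ[ℂ] (ιB →₀ ℂ) :=
    chain.restrictScalars ℂ ≪≫ₗ Finsupp.mapRange.linearEquiv eqv.toLinearEquiv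
  have bC : Module.Basis ιB ℂ (N ⧸ (I • (⊤ : Submodule R N))) :=
    (Finsupp.basisSingleOne).map G.symm
  rw [Module.finrank_eq_card_basis bC, Module.finrank_eq_card_chooseBasisIndex]

end Aux

/-- Let `R = ℂ[x₁,…,x_k]` (generators in positive degree) and let `M, M'`
be finitely generated graded `R`-modules such that `M` admits a finite filtration by
graded submodules with associated graded isomorphic to `M'` as a graded `R`-module.
If `M'` is free, then `M` is free and, for every `λ ∈ ℂ^k`, the fiber `M ⊗_R ℂ_λ`
(i.e. `M / m_λ M`, where `m_λ` is the maximal ideal of the point `λ`) has the same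
`ℂ`-dimension as the fiber `M' ⊗_R ℂ_0` at the origin. -/
theorem stmt16 (k : ℕ) (M M' : Type*) [AddCommGroup M] [AddCommGroup M']
    [Module (MvPolynomial (Fin k) ℂ) M] [Module (MvPolynomial (Fin k) ℂ) M']
    [Module ℂ M] [Module ℂ M']
    [IsScalarTower ℂ (MvPolynomial (Fin k) ℂ) M]
    [IsScalarTower ℂ (MvPolynomial (Fin k) ℂ) M']
    [Module.Finite (MvPolynomial (Fin k) ℂ) M]
    [Module.Finite (MvPolynomial (Fin k) ℂ) M']
    [Module.Free (MvPolynomial (Fin k) ℂ) M']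
    (Mgr : ℕ → Submodule ℂ M) (Mgr' : ℕ → Submodule ℂ M')
    (hM : IsModuleGrading k Mgr) (hM' : IsModuleGrading k Mgr')
    (m : ℕ) (Fil : ℕ → Submodule (MvPolynomial (Fin k) ℂ) M)
    (hmono : Monotone Fil) (h0 : Fil 0 = ⊥) (htop : Fil m = ⊤)
    (hhom : ∀ j, Fil j =
      Submodule.span (MvPolynomial (Fin k) ℂ)
        ((Fil j : Set M) ∩ ⋃ d : ℕ, (Mgr d : Set M)))
    (e : (⨁ j : Fin m,
        (Fil (j + 1) ⧸ (Submodule.comap (Fil ((j : ℕ) + 1)).subtype (Fil j))))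
        ≃ₗ[MvPolynomial (Fin k) ℂ] M')
    (he : ∀ (d : ℕ) (j : Fin m) (x : M) (hx : x ∈ Mgr d) (hx' : x ∈ Fil ((j : ℕ) + 1)),
      e (DirectSum.of
          (fun j : Fin m =>
            (Fil (j + 1) ⧸ (Submodule.comap (Fil ((j : ℕ) + 1)).subtype (Fil j)))) j
          (Submodule.Quotient.mk ⟨x, hx'⟩)) ∈ Mgr' d) :
    Module.Free (MvPolynomial (Fin k) ℂ) M ∧
      ∀ lam : Fin k → ℂ,
        Module.finrank ℂ
            (M ⧸ ((RingHom.ker (MvPolynomial.eval lam : MvPolynomial (Fin k) ℂ →+* ℂ)) •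
              (⊤ : Submodule (MvPolynomial (Fin k) ℂ) M))) =
          Module.finrank ℂ
            (M' ⧸ ((RingHom.ker
                (MvPolynomial.eval (0 : Fin k → ℂ) : MvPolynomial (Fin k) ℂ →+* ℂ)) •
              (⊤ : Submodule (MvPolynomial (Fin k) ℂ) M'))) := by
  set R := MvPolynomial (Fin k) ℂ with hR
  -- each graded piece of the associated graded is projective
  haveI hDS : Module.Projective R (⨁ j : Fin m,
      (Fil (j + 1) ⧸ (Submodule.comap (Fil ((j : ℕ) + 1)).subtype (Fil j)))) :=
    Module.Projective.of_equiv e.symm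
  have hproj : ∀ j, j < m → Module.Projective R
      (Fil (j + 1) ⧸ Submodule.comap (Fil (j + 1)).subtype (Fil j)) := by
    intro j hj
    exact Module.Projective.of_split
      (DirectSum.lof R (Fin m)
        (fun j : Fin m =>
          (Fil (j + 1) ⧸ (Submodule.comap (Fil ((j : ℕ) + 1)).subtype (Fil j)))) ⟨j, hj⟩)
      (DirectSum.component R (Fin m)
        (fun j : Fin m =>
          (Fil (j + 1) ⧸ (Submodule.comap (Fil ((j : ℕ) + 1)).subtype (Fil j)))) ⟨j, hj⟩)
      (by ext x; simp)
  obtain ⟨E⟩ := filtration_equiv m Fil hmono h0 hproj m le_rfl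
  have F : M ≃ₗ[R] M' :=
    (Submodule.topEquiv (R := R) (M := M)).symm ≪≫ₗ
      LinearEquiv.ofEq ⊤ (Fil m) htop.symm ≪≫ₗ E ≪≫ₗ
      (DirectSum.linearEquivFunOnFintype R (Fin m)
        (fun j : Fin m =>
          (Fil (j + 1) ⧸ (Submodule.comap (Fil ((j : ℕ) + 1)).subtype (Fil j))))).symm ≪≫ₗ e
  haveI hfree : Module.Free R M := Module.Free.of_equiv F.symm
  refine ⟨hfree, fun lam => ?_⟩
  rw [fiber_finrank k M lam, fiber_finrank k M' 0]
  exact F.finrank_eq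
end
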